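/- Let A : X → Y be a bounded linear operator, G : X → X monotone, α > 0, and suppose x₁, x₂ satisfy A*(A xᵢ − yᵢ) + α G(xᵢ) = 0 for i = 1,2. Then the symmetric Bregman distance satisfies ⟨G(x₁)−G(x₂), x₁ − x₂⟩ ≤ (1/(2α))‖y₁ − y₂‖². -/
import Mathlib


open scoped InnerProductSpace

theorem stmt3 {X Y : Type*} [NormedAddCommGroup X] [InnerProductSpace ℝ X]
    [NormedAddCommGroup Y] [InnerProductSpace ℝ Y] [CompleteSpace X] [CompleteSpace Y]
    (A : X →L[ℝ] Y) (G : X → X)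
    (hmono : ∀ x z : X, 0 ≤ ⟪G x - G z, x - z⟫_ℝ)
    (α : ℝ) (hα : 0 < α) (y₁ y₂ : Y) (x₁ x₂ : X)
    (h₁ : (ContinuousLinearMap.adjoint A) (A x₁ - y₁) + α • G x₁ = 0)
    (h₂ : (ContinuousLinearMap.adjoint A) (A x₂ - y₂) + α • G x₂ = 0) :
    ⟪G x₁ - G x₂, x₁ - x₂⟫_ℝ ≤ 1 / (2 * α) * ‖y₁ - y₂‖ ^ 2 := by
  set u := x₁ - x₂ with hu
  set d := y₁ - y₂ with hd
  have hsub : (ContinuousLinearMap.adjoint A) (A u - d) + α • (G x₁ - G x₂) = 0 := by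
    have := congrArg₂ (· - ·) h₁ h₂
    simp only [sub_zero] at this
    rw [← this]
    simp [hu, hd, smul_sub, map_sub]
    abel
  have key : ⟪A u - d, A u⟫_ℝ + α * ⟪G x₁ - G x₂, u⟫_ℝ = 0 := by
    have h := congrArg (fun z => ⟪z, u⟫_ℝ) hsub
    simp only [inner_add_left, ContinuousLinearMap.adjoint_inner_left,
      real_inner_smul_left, inner_zero_left] at h
    exact h
  have hkey2 : α * ⟪G x₁ - G x₂, u⟫_ℝ = ⟪d, A u⟫_ℝ - ‖A u‖ ^ 2 := by
    have : ⟪A u - d, A u⟫_ℝ = ‖A u‖ ^ 2 - ⟪d, A u⟫_ℝ := by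
      rw [inner_sub_left, real_inner_self_eq_norm_sq]
    linarith [key]
  have hcs : ⟪d, A u⟫_ℝ ≤ ‖d‖ * ‖A u‖ := real_inner_le_norm d (A u)
  have hb : ⟪d, A u⟫_ℝ - ‖A u‖ ^ 2 ≤ ‖d‖ ^ 2 / 2 := by
    nlinarith [sq_nonneg (‖d‖ - ‖A u‖), sq_nonneg (‖A u‖), norm_nonneg d, norm_nonneg (A u)]
  have : α * ⟪G x₁ - G x₂, u⟫_ℝ ≤ ‖d‖ ^ 2 / 2 := by linarith
  rw [div_mul_eq_mul_div, one_mul, le_div_iff₀ (by positivity)]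
  nlinarith [this]
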